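/- Let z ∈ ℂ with |z| < 1 and let a ≥ 0 be real. If a ≤ 1 then |(1+z)^a − 1| ≤ 1 − (1−|z|)^a, and if a ≥ 1 then |(1+z)^a − 1| ≤ (1+|z|)^a − 1, where (1+z)^a denotes the principal branch of the complex power (well defined since Re(1+z) > 0). -/

import Mathlib

open Set intervalIntegral

theorem abs_one_add_cpow_sub_one_bound
    (z : ℂ) (hz : ‖z‖ < 1) (a : ℝ) (ha : 0 ≤ a) :
    (a ≤ 1 → ‖(1 + z) ^ (a : ℂ) - 1‖ ≤ 1 - (1 - ‖z‖) ^ a) ∧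
    (1 ≤ a → ‖(1 + z) ^ (a : ℂ) - 1‖ ≤ (1 + ‖z‖) ^ a - 1) := by
  set r := ‖z‖ with hrdef
  have hr0 : 0 ≤ r := norm_nonneg z
  set w : ℝ → ℂ := fun t => 1 + (t : ℂ) * z with hwdef
  have habs_tz : ∀ t ∈ Icc (0:ℝ) 1, ‖(t:ℂ) * z‖ = t * r := by
    intro t ht
    rw [norm_mul, Complex.norm_of_nonneg ht.1]
  have hw_lb : ∀ t ∈ Icc (0:ℝ) 1, 1 - t * r ≤ ‖w t‖ := by
    intro t ht
    have h1 : ‖w t + -((t:ℂ) * z)‖ ≤ ‖w t‖ + ‖-((t:ℂ)*z)‖ :=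
      norm_add_le _ _
    have h2 : w t + -((t:ℂ) * z) = 1 := by simp [hwdef]
    rw [h2, norm_neg, habs_tz t ht, norm_one] at h1
    linarith
  have hw_ub : ∀ t ∈ Icc (0:ℝ) 1, ‖w t‖ ≤ 1 + t * r := by
    intro t ht
    have h1 : ‖1 + (t:ℂ) * z‖ ≤ ‖(1:ℂ)‖ + ‖(t:ℂ)*z‖ :=
      norm_add_le _ _
    rw [habs_tz t ht] at h1
    simpa using h1
  have hpos : ∀ t ∈ Icc (0:ℝ) 1, 0 < 1 - t * r := by
    intro t ht
    nlinarith [ht.1, ht.2]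
  have hwpos : ∀ t ∈ Icc (0:ℝ) 1, 0 < ‖w t‖ := by
    intro t ht
    exact lt_of_lt_of_le (hpos t ht) (hw_lb t ht)
  have hslit : ∀ t ∈ Icc (0:ℝ) 1, w t ∈ Complex.slitPlane := by
    intro t ht
    refine Complex.mem_slitPlane_iff.2 (Or.inl ?_)
    have h1 : -(‖(t:ℂ)*z‖) ≤ ((t:ℂ)*z).re := by
      have hh := abs_le.1 (Complex.abs_re_le_norm ((t:ℂ)*z))
      linarith [hh.1]
    rw [habs_tz t ht] at h1
    have : (w t).re = 1 + ((t:ℂ)*z).re := by simp [hwdef]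
    rw [this]
    linarith [hpos t ht]
  -- derivative of t ↦ (w t) ^ a
  have hderiv : ∀ t ∈ Icc (0:ℝ) 1,
      HasDerivAt (fun t : ℝ => w t ^ (a : ℂ)) ((a:ℂ) * w t ^ ((a:ℂ) - 1) * z) t := by
    intro t ht
    have h1 : HasDerivAt (fun u : ℂ => 1 + u * z) z (t : ℂ) := by
      simpa using ((hasDerivAt_id (t : ℂ)).mul_const z).const_add 1
    have h2 : HasDerivAt (fun u : ℂ => (1 + u * z) ^ (a : ℂ))
        ((a:ℂ) * (1 + (t:ℂ) * z) ^ ((a:ℂ) - 1) * z) (t : ℂ) :=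
      HasDerivAt.cpow_const h1 (hslit t ht)
    simpa [hwdef] using h2.comp_ofReal
  -- continuity of the derivative
  have hcontw : Continuous w := by
    rw [hwdef]; fun_prop
  have hcont : ContinuousOn (fun t : ℝ => (a:ℂ) * w t ^ ((a:ℂ) - 1) * z) (Icc (0:ℝ) 1) := by
    intro t ht
    have h1 : ContinuousAt (fun t : ℝ => w t ^ ((a:ℂ) - 1)) t :=
      (continuousAt_cpow_const (hslit t ht)).comp hcontw.continuousAt
    exact ((continuousAt_const.mul h1).mul continuousAt_const).continuousWithinAt
  have hInt : IntervalIntegrable (fun t : ℝ => (a:ℂ) * w t ^ ((a:ℂ) - 1) * z)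
      MeasureTheory.volume 0 1 := by
    apply ContinuousOn.intervalIntegrable
    rwa [uIcc_of_le (zero_le_one)]
  have hFTC : ∫ t in (0:ℝ)..1, ((a:ℂ) * w t ^ ((a:ℂ) - 1) * z) = (1 + z) ^ (a:ℂ) - 1 := by
    have := intervalIntegral.integral_eq_sub_of_hasDerivAt
      (f := fun t : ℝ => w t ^ (a : ℂ))
      (fun t ht => hderiv t (by rwa [uIcc_of_le zero_le_one] at ht)) hInt
    rw [this]
    simp [hwdef]
  have hnormeq : ∀ t ∈ Icc (0:ℝ) 1,
      ‖(a:ℂ) * w t ^ ((a:ℂ) - 1) * z‖ = a * ‖w t‖ ^ (a - 1) * r := by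
    intro t ht
    have hc : ((a:ℂ) - 1) = (((a - 1 : ℝ)) : ℂ) := by push_cast; ring
    rw [norm_mul, norm_mul, hc, Complex.norm_cpow_real,
      Complex.norm_of_nonneg ha]
  have hIntNorm : IntervalIntegrable (fun t : ℝ => ‖(a:ℂ) * w t ^ ((a:ℂ) - 1) * z‖)
      MeasureTheory.volume 0 1 := hInt.norm
  have hmain : ‖(1 + z) ^ (a:ℂ) - 1‖
      ≤ ∫ t in (0:ℝ)..1, ‖(a:ℂ) * w t ^ ((a:ℂ) - 1) * z‖ := by
    rw [← hFTC]
    exact intervalIntegral.norm_integral_le_integral_norm zero_le_one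
  constructor
  · -- case a ≤ 1
    intro ha1
    have hbound : ∀ t ∈ Icc (0:ℝ) 1,
        ‖(a:ℂ) * w t ^ ((a:ℂ) - 1) * z‖ ≤ a * (1 - t * r) ^ (a - 1) * r := by
      intro t ht
      rw [hnormeq t ht]
      have h1 : ‖w t‖ ^ (a - 1) ≤ (1 - t * r) ^ (a - 1) :=
        Real.rpow_le_rpow_of_nonpos (hpos t ht) (hw_lb t ht) (by linarith)
      exact mul_le_mul_of_nonneg_right (mul_le_mul_of_nonneg_left h1 ha) hr0
    have hgderiv : ∀ t ∈ Icc (0:ℝ) 1,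
        HasDerivAt (fun t : ℝ => -(1 - t * r) ^ a) (a * (1 - t * r) ^ (a - 1) * r) t := by
      intro t ht
      have h1 : HasDerivAt (fun t : ℝ => 1 - t * r) (-r) t := by
        simpa using ((hasDerivAt_id t).mul_const r).const_sub 1
      have h2 := (Real.hasDerivAt_rpow_const (p := a) (Or.inl (hpos t ht).ne')).comp t h1
      have h3 := h2.neg
      exact h3.congr_deriv (by ring)
    have hgCont : ContinuousOn (fun t : ℝ => a * (1 - t * r) ^ (a - 1) * r) (Icc (0:ℝ) 1) := by
      intro t ht
      have h0 : ContinuousAt (fun t : ℝ => 1 - t * r) t := by fun_prop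
      have h1 : ContinuousAt (fun t : ℝ => (1 - t * r) ^ (a - 1)) t :=
        h0.rpow_const (Or.inl (hpos t ht).ne')
      exact ((continuousAt_const.mul h1).mul continuousAt_const).continuousWithinAt
    have hgInt : IntervalIntegrable (fun t : ℝ => a * (1 - t * r) ^ (a - 1) * r)
        MeasureTheory.volume 0 1 := by
      apply ContinuousOn.intervalIntegrable
      rwa [uIcc_of_le zero_le_one]
    have hgFTC : ∫ t in (0:ℝ)..1, a * (1 - t * r) ^ (a - 1) * r = 1 - (1 - r) ^ a := by
      rw [intervalIntegral.integral_eq_sub_of_hasDerivAt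
        (f := fun t : ℝ => -(1 - t * r) ^ a)
        (fun t ht => hgderiv t (by rwa [uIcc_of_le zero_le_one] at ht)) hgInt]
      simp [Real.one_rpow]
      ring
    calc ‖(1 + z) ^ (a:ℂ) - 1‖
        ≤ ∫ t in (0:ℝ)..1, ‖(a:ℂ) * w t ^ ((a:ℂ) - 1) * z‖ := hmain
      _ ≤ ∫ t in (0:ℝ)..1, a * (1 - t * r) ^ (a - 1) * r :=
          intervalIntegral.integral_mono_on zero_le_one hIntNorm hgInt hbound
      _ = 1 - (1 - r) ^ a := hgFTC
  · -- case 1 ≤ a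
    intro ha1
    have hpos' : ∀ t ∈ Icc (0:ℝ) 1, 0 < 1 + t * r := by
      intro t ht; nlinarith [ht.1]
    have hbound : ∀ t ∈ Icc (0:ℝ) 1,
        ‖(a:ℂ) * w t ^ ((a:ℂ) - 1) * z‖ ≤ a * (1 + t * r) ^ (a - 1) * r := by
      intro t ht
      rw [hnormeq t ht]
      have h1 : ‖w t‖ ^ (a - 1) ≤ (1 + t * r) ^ (a - 1) :=
        Real.rpow_le_rpow (norm_nonneg _) (hw_ub t ht) (by linarith)
      exact mul_le_mul_of_nonneg_right (mul_le_mul_of_nonneg_left h1 ha) hr0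
    have hgderiv : ∀ t ∈ Icc (0:ℝ) 1,
        HasDerivAt (fun t : ℝ => (1 + t * r) ^ a) (a * (1 + t * r) ^ (a - 1) * r) t := by
      intro t ht
      have h1 : HasDerivAt (fun t : ℝ => 1 + t * r) r t := by
        simpa using ((hasDerivAt_id t).mul_const r).const_add 1
      have h2 := (Real.hasDerivAt_rpow_const (p := a) (Or.inl (hpos' t ht).ne')).comp t h1
      exact h2
    have hgCont : ContinuousOn (fun t : ℝ => a * (1 + t * r) ^ (a - 1) * r) (Icc (0:ℝ) 1) := by
      intro t ht
      have h0 : ContinuousAt (fun t : ℝ => 1 + t * r) t := by fun_prop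
      have h1 : ContinuousAt (fun t : ℝ => (1 + t * r) ^ (a - 1)) t :=
        h0.rpow_const (Or.inl (hpos' t ht).ne')
      exact ((continuousAt_const.mul h1).mul continuousAt_const).continuousWithinAt
    have hgInt : IntervalIntegrable (fun t : ℝ => a * (1 + t * r) ^ (a - 1) * r)
        MeasureTheory.volume 0 1 := by
      apply ContinuousOn.intervalIntegrable
      rwa [uIcc_of_le zero_le_one]
    have hgFTC : ∫ t in (0:ℝ)..1, a * (1 + t * r) ^ (a - 1) * r = (1 + r) ^ a - 1 := by
      rw [intervalIntegral.integral_eq_sub_of_hasDerivAt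
        (f := fun t : ℝ => (1 + t * r) ^ a)
        (fun t ht => hgderiv t (by rwa [uIcc_of_le zero_le_one] at ht)) hgInt]
      simp [Real.one_rpow]
    calc ‖(1 + z) ^ (a:ℂ) - 1‖
        ≤ ∫ t in (0:ℝ)..1, ‖(a:ℂ) * w t ^ ((a:ℂ) - 1) * z‖ := hmain
      _ ≤ ∫ t in (0:ℝ)..1, a * (1 + t * r) ^ (a - 1) * r :=
          intervalIntegral.integral_mono_on zero_le_one hIntNorm hgInt hbound
      _ = (1 + r) ^ a - 1 := hgFTC
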